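/- Let p, q, k ≥ 1. On ℂ[z_{i,a}, w_{j,a} : 1 ≤ i ≤ p, 1 ≤ j ≤ q, 1 ≤ a ≤ k], let π be the linear map on Mat_{p+q}(ℂ) determined by: π(E_{i,j}) = −Σ_{a=1}^k z_{j,a} ∂/∂z_{i,a} for 1 ≤ i,j ≤ p; π(E_{i,p+j}) = 2 Σ_{a=1}^k ∂/∂z_{i,a} ∂/∂w_{j,a} for 1 ≤ i ≤ p, 1 ≤ j ≤ q; π(E_{p+i,j}) = multiplication by −(1/2) Σ_{a=1}^k z_{j,a} w_{i,a} for 1 ≤ i ≤ q, 1 ≤ j ≤ p; and π(E_{p+i,p+j}) = Σ_{a=1}^k ∂/∂w_{j,a} ∘ (mult by w_{i,a}) (that is, Σ_a w_{i,a}∂/∂w_{j,a} + kδ_{ij}) for 1 ≤ i,j ≤ q. Then: (a) π(X)∘π(Y) − π(Y)∘π(X) = π(XY − YX) for all X, Y ∈ Mat_{p+q}(ℂ), so π is a Lie algebra homomorphism gl_{p+q}(ℂ) → End of the polynomial algebra; (b) for every invertible g ∈ Mat_k(ℂ), letting ρ(g) be the ℂ-algebra endomorphism determined by z_{i,a} ↦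 Σ_b z_{i,b} g_{b,a} and w_{j,a} ↦ Σ_b w_{j,b} (g⁻¹)_{a,b}, one has ρ(g) ∘ π(X) = π(X) ∘ ρ(g) for all X ∈ Mat_{p+q}(ℂ). -/

import Mathlib

open Matrix MvPolynomial

/-- Polynomials in `z_{i,a}` (`Sum.inl (i,a)`) and `w_{j,a}` (`Sum.inr (j,a)`). -/
abbrev PolyU (p q k : ℕ) := MvPolynomial ((Fin p × Fin k) ⊕ (Fin q × Fin k)) ℂ

/-- The values of `π` on the matrix units `E_{r,s}` of `gl_{p+q}(ℂ)`. -/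
noncomputable def PiU (p q k : ℕ) :
    Fin p ⊕ Fin q → Fin p ⊕ Fin q → Module.End ℂ (PolyU p q k)
  | Sum.inl i, Sum.inl j =>
      -∑ a : Fin k,
        LinearMap.mulLeft ℂ (MvPolynomial.X (Sum.inl (j, a))) *
          (MvPolynomial.pderiv (R := ℂ) (Sum.inl (i, a))).toLinearMap
  | Sum.inl i, Sum.inr j =>
      (2 : ℂ) • ∑ a : Fin k,
        (MvPolynomial.pderiv (R := ℂ) (Sum.inl (i, a))).toLinearMap *
          (MvPolynomial.pderiv (R := ℂ) (Sum.inr (j, a))).toLinearMap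
  | Sum.inr i, Sum.inl j =>
      LinearMap.mulLeft ℂ
        ((-(1 / 2) : ℂ) • ∑ a : Fin k,
          MvPolynomial.X (Sum.inl (j, a)) * MvPolynomial.X (Sum.inr (i, a)))
  | Sum.inr i, Sum.inr j =>
      ∑ a : Fin k,
        (MvPolynomial.pderiv (R := ℂ) (Sum.inr (j, a))).toLinearMap *
          LinearMap.mulLeft ℂ (MvPolynomial.X (Sum.inr (i, a)))

/-- The linear extension of the values on the matrix units to all of `gl_{p+q}(ℂ)`. -/
noncomputable def piU (p q k : ℕ) (X : Matrix (Fin p ⊕ Fin q) (Fin p ⊕ Fin q) ℂ) :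
    Module.End ℂ (PolyU p q k) :=
  ∑ r : Fin p ⊕ Fin q, ∑ s : Fin p ⊕ Fin q, X r s • PiU p q k r s

/-- The substitution operator `ρ(g)` determined by `z_{i,a} ↦ Σ_b z_{i,b} g_{b,a}` and
`w_{j,a} ↦ Σ_b w_{j,b} (g⁻¹)_{a,b}`, i.e. `(z; w) ↦ (z g; w (gᵀ)⁻¹)`. -/
noncomputable def rhoU (p q k : ℕ) (g : Matrix (Fin k) (Fin k) ℂ) :
    PolyU p q k →ₐ[ℂ] PolyU p q k :=
  MvPolynomial.aeval fun v =>
    match v with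
    | Sum.inl (i, a) =>
        ∑ b : Fin k, MvPolynomial.X (Sum.inl (i, b)) * MvPolynomial.C (g b a)
    | Sum.inr (j, a) =>
        ∑ b : Fin k, MvPolynomial.X (Sum.inr (j, b)) * MvPolynomial.C (g⁻¹ a b)


open Matrix MvPolynomial

namespace HoweAux

variable {σ : Type*} [DecidableEq σ]

/-- Multiplication operator. -/
noncomputable def Mo (v : σ) : Module.End ℂ (MvPolynomial σ ℂ) :=
  LinearMap.mulLeft ℂ (X v)

/-- Derivative operator. -/
noncomputable def Do (v : σ) : Module.End ℂ (MvPolynomial σ ℂ) :=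
  (MvPolynomial.pderiv (R := ℂ) v).toLinearMap

lemma Mo_mul_Mo (u v : σ) : Mo u * Mo v = Mo v * Mo u := by
  refine LinearMap.ext fun f => ?_
  simp [Mo, Module.End.mul_apply, mul_left_comm]

lemma pderiv_comm (u v : σ) (f : MvPolynomial σ ℂ) :
    pderiv u (pderiv v f) = pderiv v (pderiv u f) := by
  induction f using MvPolynomial.induction_on with
  | C a => simp
  | add p q hp hq => simp [hp, hq]
  | mul_X p n ih =>
      have h1 : ∀ (t : σ) (r : MvPolynomial σ ℂ),
          pderiv t (r * X n) = pderiv t r * X n + (if n = t then r else 0) := by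
        intro t r
        rcases eq_or_ne n t with rfl | h
        · simp [pderiv_mul, mul_comm, add_comm]
        · simp [pderiv_mul, pderiv_X_of_ne h, h, mul_comm]
      rw [h1 v p, map_add, h1 u (pderiv v p), apply_ite (pderiv u), map_zero,
        h1 u p, map_add, h1 v (pderiv u p), apply_ite (pderiv v), map_zero, ih]
      try abel

lemma Do_mul_Do (u v : σ) : Do u * Do v = Do v * Do u := by
  refine LinearMap.ext fun f => ?_
  simp [Do, Module.End.mul_apply, pderiv_comm]

lemma DM (u v : σ) :
    Do u * Mo v - Mo v * Do u = if u = v then (1 : Module.End ℂ (MvPolynomial σ ℂ)) else 0 := by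
  refine LinearMap.ext fun f => ?_
  simp only [LinearMap.sub_apply, Module.End.mul_apply, Do, Mo,
    LinearMap.mulLeft_apply, Derivation.coeFn_coe]
  rw [pderiv_mul]
  rcases eq_or_ne u v with rfl | h
  · simp
  · simp [pderiv_X_of_ne (Ne.symm h), h]

lemma MD (u v : σ) :
    Mo v * Do u - Do u * Mo v = -if u = v then (1 : Module.End ℂ (MvPolynomial σ ℂ)) else 0 := by
  rw [← DM u v]; abel

lemma DD_sub (u v : σ) : Do u * Do v - Do v * Do u = 0 := by rw [Do_mul_Do]; abel

lemma MM_sub (u v : σ) : Mo u * Mo v - Mo v * Mo u = 0 := by rw [Mo_mul_Mo]; abel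

lemma comm4 {E : Type*} [Ring E] (a b c d : E) :
    a * b * (c * d) - c * d * (a * b) =
      a * (b * c - c * b) * d + a * c * (b * d - d * b) + (a * c - c * a) * (d * b)
        + c * (a * d - d * a) * b := by
  noncomm_ring

lemma scaled_comm {E : Type*} [Ring E] [Algebra ℂ E] {k : ℕ} (c d : ℂ) (f g : Fin k → E) :
    (c • ∑ a, f a) * (d • ∑ b, g b) - (d • ∑ b, g b) * (c • ∑ a, f a)
      = (c * d) • ∑ a, ∑ b, (f a * g b - g b * f a) := by
  rw [smul_mul_smul_comm, smul_mul_smul_comm, mul_comm d c, ← smul_sub]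
  congr 1
  rw [Finset.sum_mul_sum, Finset.sum_mul_sum,
    show (∑ b, ∑ a, g b * f a) = ∑ a, ∑ b, g b * f a from Finset.sum_comm,
    ← Finset.sum_sub_distrib]
  exact Finset.sum_congr rfl fun a _ => (Finset.sum_sub_distrib _ _).symm

end HoweAux

namespace HoweAux

section Generic
variable {E : Type*} [Ring E]

lemma quadC (a b c d : E) {P1 Q1 P2 Q2 P3 Q3 P4 Q4 : Prop}
    [Decidable P1] [Decidable Q1] [Decidable P2] [Decidable Q2]
    [Decidable P3] [Decidable Q3] [Decidable P4] [Decidable Q4]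
    (h1 : b * c - c * b = (if P1 then 1 else 0) - (if Q1 then 1 else 0))
    (h2 : b * d - d * b = (if P2 then 1 else 0) - (if Q2 then 1 else 0))
    (h3 : a * c - c * a = (if P3 then 1 else 0) - (if Q3 then 1 else 0))
    (h4 : a * d - d * a = (if P4 then 1 else 0) - (if Q4 then 1 else 0)) :
    a * b * (c * d) - c * d * (a * b)
      = (((if P1 then a * d else 0) - (if Q1 then a * d else 0))
          + ((if P2 then a * c else 0) - (if Q2 then a * c else 0)))
        + (((if P3 then d * b else 0) - (if Q3 then d * b else 0))
          + ((if P4 then c * b else 0) - (if Q4 then c * b else 0))) := by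
  rw [comm4, h1, h2, h3, h4]
  simp only [mul_sub, sub_mul, mul_ite, ite_mul, mul_one, one_mul, mul_zero, zero_mul,
    sub_zero, zero_sub, mul_assoc]
  try abel

end Generic

variable {σ : Type*} [DecidableEq σ]

lemma DMc (u v : σ) :
    Do u * Mo v - Mo v * Do u
      = (if u = v then (1 : Module.End ℂ (MvPolynomial σ ℂ)) else 0)
        - (if False then 1 else 0) := by
  rw [DM]; simp

lemma MDc (u v : σ) :
    Mo v * Do u - Do u * Mo v
      = (if False then (1 : Module.End ℂ (MvPolynomial σ ℂ)) else 0)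
        - (if u = v then 1 else 0) := by
  rw [MD]; simp

lemma DDc (u v : σ) :
    Do u * Do v - Do v * Do u
      = (if False then (1 : Module.End ℂ (MvPolynomial σ ℂ)) else 0)
        - (if False then 1 else 0) := by
  rw [Do_mul_Do]; simp

lemma MMc (u v : σ) :
    Mo u * Mo v - Mo v * Mo u
      = (if False then (1 : Module.End ℂ (MvPolynomial σ ℂ)) else 0)
        - (if False then 1 else 0) := by
  rw [Mo_mul_Mo]; simp

lemma DM_eq (u v : σ) :
    Do u * Mo v = Mo v * Do u + (if u = v then (1 : Module.End ℂ (MvPolynomial σ ℂ)) else 0) := by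
  have h := DM u v
  have := eq_add_of_sub_eq h
  rw [this]; abel

end HoweAux

open Matrix MvPolynomial

namespace HoweAux

variable {p q k : ℕ}

local notation "vt" => (Fin p × Fin k) ⊕ (Fin q × Fin k)

lemma PiU_ll (i j : Fin p) :
    PiU p q k (Sum.inl i) (Sum.inl j)
      = (-1 : ℂ) • ∑ a : Fin k, Mo (Sum.inl (j, a) : vt) * Do (Sum.inl (i, a) : vt) := by
  have : ((-1 : ℂ) • ∑ a : Fin k, Mo (Sum.inl (j, a) : vt) * Do (Sum.inl (i, a) : vt))
      = -∑ a : Fin k, Mo (Sum.inl (j, a) : vt) * Do (Sum.inl (i, a) : vt) :=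
    by module
  rw [this]; rfl

lemma PiU_lr (i : Fin p) (j : Fin q) :
    PiU p q k (Sum.inl i) (Sum.inr j)
      = (2 : ℂ) • ∑ a : Fin k, Do (Sum.inl (i, a) : vt) * Do (Sum.inr (j, a) : vt) := rfl

lemma PiU_rl (i : Fin q) (j : Fin p) :
    PiU p q k (Sum.inr i) (Sum.inl j)
      = (-(1 / 2) : ℂ) • ∑ a : Fin k, Mo (Sum.inl (j, a) : vt) * Mo (Sum.inr (i, a) : vt) := by
  refine LinearMap.ext fun f => ?_
  show ((-(1 / 2) : ℂ) • ∑ a : Fin k,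
      (X (Sum.inl (j, a)) : PolyU p q k) * X (Sum.inr (i, a))) * f = _
  simp [Mo, Module.End.mul_apply, Finset.smul_sum, Finset.sum_mul, smul_mul_assoc, mul_assoc]

lemma PiU_rr (i j : Fin q) :
    PiU p q k (Sum.inr i) (Sum.inr j)
      = (1 : ℂ) • ∑ a : Fin k, Do (Sum.inr (j, a) : vt) * Mo (Sum.inr (i, a) : vt) := by
  rw [one_smul]; rfl
lemma caseAA (i j l m : Fin p) :
    PiU p q k (Sum.inl i) (Sum.inl j) * PiU p q k (Sum.inl l) (Sum.inl m)
      - PiU p q k (Sum.inl l) (Sum.inl m) * PiU p q k (Sum.inl i) (Sum.inl j)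
    = (if (Sum.inl j : Fin p ⊕ Fin q) = Sum.inl l then (1:ℂ) else 0) • PiU p q k (Sum.inl i) (Sum.inl m)
      - (if (Sum.inl m : Fin p ⊕ Fin q) = Sum.inl i then (1:ℂ) else 0) • PiU p q k (Sum.inl l) (Sum.inl j) := by
  simp only [PiU_ll]
  rw [scaled_comm]
  have key : ∀ a b : Fin k, _ :=
    fun a b => quadC (Mo (Sum.inl (j, a) : vt)) (Do (Sum.inl (i, a) : vt))
      (Mo (Sum.inl (m, b) : vt)) (Do (Sum.inl (l, b) : vt))
      (DMc _ _) (DDc _ _) (MMc _ _) (MDc _ _)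
  simp only [key]
  rcases eq_or_ne i m with rfl | him
  · rcases eq_or_ne l j with rfl | hlj
    · simp [Finset.sum_sub_distrib, Finset.sum_add_distrib, Finset.sum_ite_eq, Finset.sum_ite_eq', smul_sub, Finset.smul_sum]
      try module
      try abel
      try abel
    · simp [Finset.sum_sub_distrib, Finset.sum_add_distrib, Finset.sum_ite_eq, Finset.sum_ite_eq', hlj, Ne.symm hlj,
        smul_sub, Finset.smul_sum]
      try module
      try abel
  · rcases eq_or_ne l j with rfl | hlj
    · simp [Finset.sum_sub_distrib, Finset.sum_add_distrib, Finset.sum_ite_eq, Finset.sum_ite_eq', him, Ne.symm him,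
        smul_sub, Finset.smul_sum]
      try module
      try abel
    · simp [Finset.sum_sub_distrib, Finset.sum_add_distrib, Finset.sum_ite_eq, Finset.sum_ite_eq', him, Ne.symm him, hlj, Ne.symm hlj,
        smul_sub, Finset.smul_sum]
      try module
      try abel

lemma caseAB (i j l : Fin p) (m : Fin q) :
    PiU p q k (Sum.inl i) (Sum.inl j) * PiU p q k (Sum.inl l) (Sum.inr m)
      - PiU p q k (Sum.inl l) (Sum.inr m) * PiU p q k (Sum.inl i) (Sum.inl j)
    = (if (Sum.inl j : Fin p ⊕ Fin q) = Sum.inl l then (1:ℂ) else 0) • PiU p q k (Sum.inl i) (Sum.inr m)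
      - (if (Sum.inr m : Fin p ⊕ Fin q) = Sum.inl i then (1:ℂ) else 0) • PiU p q k (Sum.inl l) (Sum.inl j) := by
  simp only [PiU_ll, PiU_lr]
  rw [scaled_comm]
  have key : ∀ a b : Fin k, _ :=
    fun a b => quadC (Mo (Sum.inl (j, a) : vt)) (Do (Sum.inl (i, a) : vt))
      (Do (Sum.inl (l, b) : vt)) (Do (Sum.inr (m, b) : vt))
      (DDc _ _) (DDc _ _) (MDc _ _) (MDc _ _)
  simp only [key]
  have swapDD : ∀ a b : Fin k,
      Do (Sum.inr (m, b) : vt) * Do (Sum.inl (i, a) : vt)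
        = Do (Sum.inl (i, a) : vt) * Do (Sum.inr (m, b) : vt) := fun a b => Do_mul_Do _ _
  rcases eq_or_ne l j with rfl | hlj
  · simp [Finset.sum_sub_distrib, Finset.sum_add_distrib, Finset.sum_ite_eq, Finset.sum_ite_eq', swapDD, smul_sub, Finset.smul_sum,
      smul_smul, PiU_lr]
    try module
  · simp [Finset.sum_sub_distrib, Finset.sum_add_distrib, Finset.sum_ite_eq, Finset.sum_ite_eq', hlj, Ne.symm hlj, swapDD,
      smul_sub, Finset.smul_sum, PiU_lr]
    try module
    try abel

lemma caseAC (i j : Fin p) (l : Fin q) (m : Fin p) :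
    PiU p q k (Sum.inl i) (Sum.inl j) * PiU p q k (Sum.inr l) (Sum.inl m)
      - PiU p q k (Sum.inr l) (Sum.inl m) * PiU p q k (Sum.inl i) (Sum.inl j)
    = (if (Sum.inl j : Fin p ⊕ Fin q) = Sum.inr l then (1:ℂ) else 0) • PiU p q k (Sum.inl i) (Sum.inl m)
      - (if (Sum.inl m : Fin p ⊕ Fin q) = Sum.inl i then (1:ℂ) else 0) • PiU p q k (Sum.inr l) (Sum.inl j) := by
  simp only [PiU_ll, PiU_rl]
  rw [scaled_comm]
  have key : ∀ a b : Fin k, _ :=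
    fun a b => quadC (Mo (Sum.inl (j, a) : vt)) (Do (Sum.inl (i, a) : vt))
      (Mo (Sum.inl (m, b) : vt)) (Mo (Sum.inr (l, b) : vt))
      (DMc _ _) (DMc _ _) (MMc _ _) (MMc _ _)
  simp only [key]
  rcases eq_or_ne i m with rfl | him
  · simp [Finset.sum_sub_distrib, Finset.sum_add_distrib, Finset.sum_ite_eq, Finset.sum_ite_eq', smul_sub, Finset.smul_sum,
      smul_smul, PiU_rl]
    try module
  · simp [Finset.sum_sub_distrib, Finset.sum_add_distrib, Finset.sum_ite_eq, Finset.sum_ite_eq', him, Ne.symm him,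
      smul_sub, Finset.smul_sum, PiU_rl]
    try module
    try abel

lemma caseAD (i j : Fin p) (l m : Fin q) :
    PiU p q k (Sum.inl i) (Sum.inl j) * PiU p q k (Sum.inr l) (Sum.inr m)
      - PiU p q k (Sum.inr l) (Sum.inr m) * PiU p q k (Sum.inl i) (Sum.inl j)
    = (if (Sum.inl j : Fin p ⊕ Fin q) = Sum.inr l then (1:ℂ) else 0) • PiU p q k (Sum.inl i) (Sum.inr m)
      - (if (Sum.inr m : Fin p ⊕ Fin q) = Sum.inl i then (1:ℂ) else 0) • PiU p q k (Sum.inr l) (Sum.inl j) := by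
  simp only [PiU_ll, PiU_rr]
  rw [scaled_comm]
  have key : ∀ a b : Fin k, _ :=
    fun a b => quadC (Mo (Sum.inl (j, a) : vt)) (Do (Sum.inl (i, a) : vt))
      (Do (Sum.inr (m, b) : vt)) (Mo (Sum.inr (l, b) : vt))
      (DDc _ _) (DMc _ _) (MDc _ _) (MMc _ _)
  simp only [key]
  simp

lemma caseBB (i : Fin p) (j : Fin q) (l : Fin p) (m : Fin q) :
    PiU p q k (Sum.inl i) (Sum.inr j) * PiU p q k (Sum.inl l) (Sum.inr m)
      - PiU p q k (Sum.inl l) (Sum.inr m) * PiU p q k (Sum.inl i) (Sum.inr j)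
    = (if (Sum.inr j : Fin p ⊕ Fin q) = Sum.inl l then (1:ℂ) else 0) • PiU p q k (Sum.inl i) (Sum.inr m)
      - (if (Sum.inr m : Fin p ⊕ Fin q) = Sum.inl i then (1:ℂ) else 0) • PiU p q k (Sum.inl l) (Sum.inr j) := by
  simp only [PiU_lr]
  rw [scaled_comm]
  have key : ∀ a b : Fin k, _ :=
    fun a b => quadC (Do (Sum.inl (i, a) : vt)) (Do (Sum.inr (j, a) : vt))
      (Do (Sum.inl (l, b) : vt)) (Do (Sum.inr (m, b) : vt))
      (DDc _ _) (DDc _ _) (DDc _ _) (DDc _ _)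
  simp only [key]
  simp

lemma caseBC (i : Fin p) (j : Fin q) (l : Fin q) (m : Fin p) :
    PiU p q k (Sum.inl i) (Sum.inr j) * PiU p q k (Sum.inr l) (Sum.inl m)
      - PiU p q k (Sum.inr l) (Sum.inl m) * PiU p q k (Sum.inl i) (Sum.inr j)
    = (if (Sum.inr j : Fin p ⊕ Fin q) = Sum.inr l then (1:ℂ) else 0) • PiU p q k (Sum.inl i) (Sum.inl m)
      - (if (Sum.inl m : Fin p ⊕ Fin q) = Sum.inl i then (1:ℂ) else 0) • PiU p q k (Sum.inr l) (Sum.inr j) := by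
  simp only [PiU_lr, PiU_rl]
  rw [scaled_comm]
  have key : ∀ a b : Fin k, _ :=
    fun a b => quadC (Do (Sum.inl (i, a) : vt)) (Do (Sum.inr (j, a) : vt))
      (Mo (Sum.inl (m, b) : vt)) (Mo (Sum.inr (l, b) : vt))
      (DMc _ _) (DMc _ _) (DMc _ _) (DMc _ _)
  simp only [key]
  have swapDZ : ∀ a b : Fin k,
      Do (Sum.inl (i, a) : vt) * Mo (Sum.inl (m, b) : vt)
        = Mo (Sum.inl (m, b) : vt) * Do (Sum.inl (i, a) : vt)
          + (if (Sum.inl (i, a) : vt) = Sum.inl (m, b) then 1 else 0) := fun a b => DM_eq _ _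
  have swapDW : ∀ a : Fin k,
      Do (Sum.inr (j, a) : vt) * Mo (Sum.inr (l, a) : vt)
        = Mo (Sum.inr (l, a) : vt) * Do (Sum.inr (j, a) : vt)
          + (if (Sum.inr (j, a) : vt) = Sum.inr (l, a) then 1 else 0) := fun a => DM_eq _ _
  simp only [PiU_ll, PiU_rr, swapDZ, swapDW]
  rcases eq_or_ne j l with rfl | hjl
  · rcases eq_or_ne i m with rfl | him
    · simp [Finset.sum_sub_distrib, Finset.sum_add_distrib, Finset.sum_ite_eq,
        smul_sub, smul_add, Finset.smul_sum, smul_smul]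
      try module
      try abel
      try module
    · simp [Finset.sum_sub_distrib, Finset.sum_add_distrib, Finset.sum_ite_eq,
        him, Ne.symm him, smul_sub, smul_add, Finset.smul_sum, smul_smul]
      try module
      try abel
      try module
  · rcases eq_or_ne i m with rfl | him
    · simp [Finset.sum_sub_distrib, Finset.sum_add_distrib, Finset.sum_ite_eq,
        hjl, Ne.symm hjl, smul_sub, smul_add, Finset.smul_sum, smul_smul]
      try module
      try abel
      try module
    · simp [Finset.sum_sub_distrib, Finset.sum_add_distrib, Finset.sum_ite_eq,
        hjl, Ne.symm hjl, him, Ne.symm him, smul_sub, smul_add, Finset.smul_sum, smul_smul]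
      try module
      try abel

lemma caseBD (i : Fin p) (j : Fin q) (l m : Fin q) :
    PiU p q k (Sum.inl i) (Sum.inr j) * PiU p q k (Sum.inr l) (Sum.inr m)
      - PiU p q k (Sum.inr l) (Sum.inr m) * PiU p q k (Sum.inl i) (Sum.inr j)
    = (if (Sum.inr j : Fin p ⊕ Fin q) = Sum.inr l then (1:ℂ) else 0) • PiU p q k (Sum.inl i) (Sum.inr m)
      - (if (Sum.inr m : Fin p ⊕ Fin q) = Sum.inl i then (1:ℂ) else 0) • PiU p q k (Sum.inr l) (Sum.inr j) := by
  simp only [PiU_lr, PiU_rr]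
  rw [scaled_comm]
  have key : ∀ a b : Fin k, _ :=
    fun a b => quadC (Do (Sum.inl (i, a) : vt)) (Do (Sum.inr (j, a) : vt))
      (Do (Sum.inr (m, b) : vt)) (Mo (Sum.inr (l, b) : vt))
      (DDc _ _) (DMc _ _) (DDc _ _) (DMc _ _)
  simp only [key]
  have swapDD : ∀ a b : Fin k,
      Do (Sum.inr (m, b) : vt) * Do (Sum.inl (i, a) : vt)
        = Do (Sum.inl (i, a) : vt) * Do (Sum.inr (m, b) : vt) := fun a b => Do_mul_Do _ _
  rcases eq_or_ne j l with rfl | hjl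
  · simp [Finset.sum_sub_distrib, Finset.sum_add_distrib, Finset.sum_ite_eq, Finset.sum_ite_eq', swapDD, smul_sub, Finset.smul_sum,
      smul_smul, PiU_lr]
    try module
  · simp [Finset.sum_sub_distrib, Finset.sum_add_distrib, Finset.sum_ite_eq, Finset.sum_ite_eq', hjl, Ne.symm hjl, swapDD,
      smul_sub, Finset.smul_sum, PiU_lr]
    try module
    try abel

lemma caseCC (i : Fin q) (j : Fin p) (l : Fin q) (m : Fin p) :
    PiU p q k (Sum.inr i) (Sum.inl j) * PiU p q k (Sum.inr l) (Sum.inl m)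
      - PiU p q k (Sum.inr l) (Sum.inl m) * PiU p q k (Sum.inr i) (Sum.inl j)
    = (if (Sum.inl j : Fin p ⊕ Fin q) = Sum.inr l then (1:ℂ) else 0) • PiU p q k (Sum.inr i) (Sum.inl m)
      - (if (Sum.inl m : Fin p ⊕ Fin q) = Sum.inr i then (1:ℂ) else 0) • PiU p q k (Sum.inr l) (Sum.inl j) := by
  simp only [PiU_rl]
  rw [scaled_comm]
  have key : ∀ a b : Fin k, _ :=
    fun a b => quadC (Mo (Sum.inl (j, a) : vt)) (Mo (Sum.inr (i, a) : vt))
      (Mo (Sum.inl (m, b) : vt)) (Mo (Sum.inr (l, b) : vt))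
      (MMc _ _) (MMc _ _) (MMc _ _) (MMc _ _)
  simp only [key]
  simp

lemma caseCD (i : Fin q) (j : Fin p) (l m : Fin q) :
    PiU p q k (Sum.inr i) (Sum.inl j) * PiU p q k (Sum.inr l) (Sum.inr m)
      - PiU p q k (Sum.inr l) (Sum.inr m) * PiU p q k (Sum.inr i) (Sum.inl j)
    = (if (Sum.inl j : Fin p ⊕ Fin q) = Sum.inr l then (1:ℂ) else 0) • PiU p q k (Sum.inr i) (Sum.inr m)
      - (if (Sum.inr m : Fin p ⊕ Fin q) = Sum.inr i then (1:ℂ) else 0) • PiU p q k (Sum.inr l) (Sum.inl j) := by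
  simp only [PiU_rl, PiU_rr]
  rw [scaled_comm]
  have key : ∀ a b : Fin k, _ :=
    fun a b => quadC (Mo (Sum.inl (j, a) : vt)) (Mo (Sum.inr (i, a) : vt))
      (Do (Sum.inr (m, b) : vt)) (Mo (Sum.inr (l, b) : vt))
      (MDc _ _) (MMc _ _) (MDc _ _) (MMc _ _)
  simp only [key]
  rcases eq_or_ne m i with rfl | hmi
  · simp [Finset.sum_sub_distrib, Finset.sum_add_distrib, Finset.sum_ite_eq, Finset.sum_ite_eq', smul_sub, Finset.smul_sum,
      smul_smul, PiU_rl]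
    try module
  · simp [Finset.sum_sub_distrib, Finset.sum_add_distrib, Finset.sum_ite_eq, Finset.sum_ite_eq', hmi, Ne.symm hmi,
      smul_sub, Finset.smul_sum, PiU_rl]
    try module
    try abel

lemma caseDD (i j l m : Fin q) :
    PiU p q k (Sum.inr i) (Sum.inr j) * PiU p q k (Sum.inr l) (Sum.inr m)
      - PiU p q k (Sum.inr l) (Sum.inr m) * PiU p q k (Sum.inr i) (Sum.inr j)
    = (if (Sum.inr j : Fin p ⊕ Fin q) = Sum.inr l then (1:ℂ) else 0) • PiU p q k (Sum.inr i) (Sum.inr m)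
      - (if (Sum.inr m : Fin p ⊕ Fin q) = Sum.inr i then (1:ℂ) else 0) • PiU p q k (Sum.inr l) (Sum.inr j) := by
  simp only [PiU_rr]
  rw [scaled_comm]
  have key : ∀ a b : Fin k, _ :=
    fun a b => quadC (Do (Sum.inr (j, a) : vt)) (Mo (Sum.inr (i, a) : vt))
      (Do (Sum.inr (m, b) : vt)) (Mo (Sum.inr (l, b) : vt))
      (MDc _ _) (MMc _ _) (DDc _ _) (DMc _ _)
  simp only [key]
  rcases eq_or_ne j l with rfl | hjl
  · rcases eq_or_ne m i with rfl | hmi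
    · simp [Finset.sum_sub_distrib, Finset.sum_add_distrib, Finset.sum_ite_eq, Finset.sum_ite_eq', smul_sub, Finset.smul_sum, PiU_rr]
      try module
      try abel
      try abel
    · simp [Finset.sum_sub_distrib, Finset.sum_add_distrib, Finset.sum_ite_eq, Finset.sum_ite_eq', hmi, Ne.symm hmi,
        smul_sub, Finset.smul_sum, PiU_rr]
      try module
      try abel
  · rcases eq_or_ne m i with rfl | hmi
    · simp [Finset.sum_sub_distrib, Finset.sum_add_distrib, Finset.sum_ite_eq, Finset.sum_ite_eq', hjl, Ne.symm hjl,
        smul_sub, Finset.smul_sum, PiU_rr]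
      try module
      try abel
    · simp [Finset.sum_sub_distrib, Finset.sum_add_distrib, Finset.sum_ite_eq, Finset.sum_ite_eq', hjl, Ne.symm hjl, hmi, Ne.symm hmi,
        smul_sub, Finset.smul_sum, PiU_rr]
      try module
      try abel


lemma flip_case {A B C D : Module.End ℂ (PolyU p q k)} {x y : ℂ}
    (h : A * B - B * A = x • C - y • D) : B * A - A * B = y • D - x • C := by
  have h2 := congrArg (fun z => -z) h
  simp only [neg_sub] at h2
  exact h2

set_option maxHeartbeats 1000000 in
lemma PiU_comm (r s t u : Fin p ⊕ Fin q) :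
    PiU p q k r s * PiU p q k t u - PiU p q k t u * PiU p q k r s
      = (if s = t then (1:ℂ) else 0) • PiU p q k r u
        - (if u = r then (1:ℂ) else 0) • PiU p q k t s := by
  rcases r with i | i <;> rcases s with j | j <;> rcases t with l | l <;> rcases u with m | m
  · exact caseAA i j l m
  · exact caseAB i j l m
  · exact caseAC i j l m
  · exact caseAD i j l m
  · exact flip_case (caseAB l m i j)
  · exact caseBB i j l m
  · exact caseBC i j l m
  · exact caseBD i j l m
  · exact flip_case (caseAC l m i j)
  · exact flip_case (caseBC l m i j)
  · exact caseCC i j l m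
  · exact caseCD i j l m
  · exact flip_case (caseAD l m i j)
  · exact flip_case (caseBD l m i j)
  · exact flip_case (caseCD l m i j)
  · exact caseDD i j l m

end HoweAux

namespace HoweAux

variable {p q k : ℕ}

local notation "vt" => (Fin p × Fin k) ⊕ (Fin q × Fin k)

/-! ### Assembly of part (a) -/

noncomputable def piU' (p q k : ℕ) (X : Matrix (Fin p ⊕ Fin q) (Fin p ⊕ Fin q) ℂ) :
    Module.End ℂ (PolyU p q k) :=
  ∑ r : Fin p ⊕ Fin q, ∑ s : Fin p ⊕ Fin q, X r s • PiU p q k r s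

lemma piU'_add (X Y : Matrix (Fin p ⊕ Fin q) (Fin p ⊕ Fin q) ℂ) :
    piU' p q k (X + Y) = piU' p q k X + piU' p q k Y := by
  simp [piU', Matrix.add_apply, add_smul, Finset.sum_add_distrib]

lemma piU'_smul (c : ℂ) (X : Matrix (Fin p ⊕ Fin q) (Fin p ⊕ Fin q) ℂ) :
    piU' p q k (c • X) = c • piU' p q k X := by
  simp [piU', Matrix.smul_apply, smul_smul, Finset.smul_sum]

noncomputable def piUL (p q k : ℕ) :
    Matrix (Fin p ⊕ Fin q) (Fin p ⊕ Fin q) ℂ →ₗ[ℂ] Module.End ℂ (PolyU p q k) where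
  toFun := piU' p q k
  map_add' := piU'_add
  map_smul' := piU'_smul

lemma piUL_apply (X : Matrix (Fin p ⊕ Fin q) (Fin p ⊕ Fin q) ℂ) :
    piUL p q k X = piU' p q k X := rfl

lemma piUL_std (r s : Fin p ⊕ Fin q) :
    piUL p q k (Matrix.single r s 1) = PiU p q k r s := by
  have hstd : ∀ r' s' : Fin p ⊕ Fin q,
      Matrix.single r s (1 : ℂ) r' s' = if r = r' ∧ s = s' then 1 else 0 := by
    intro r' s'
    simp [Matrix.single, Pi.single_apply, ite_and, Matrix.of_apply]
  simp [piUL_apply, piU', hstd, ite_and, ite_smul, zero_smul, Finset.sum_ite_eq,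
    Finset.sum_ite_eq']

noncomputable def Fb (p q k : ℕ) :
    Matrix (Fin p ⊕ Fin q) (Fin p ⊕ Fin q) ℂ →ₗ[ℂ]
      Matrix (Fin p ⊕ Fin q) (Fin p ⊕ Fin q) ℂ →ₗ[ℂ] Module.End ℂ (PolyU p q k) :=
  LinearMap.mk₂ ℂ (fun X Y => piUL p q k X * piUL p q k Y - piUL p q k Y * piUL p q k X)
    (fun X X' Y => by simp only [map_add, add_mul, mul_add]; abel)
    (fun c X Y => by
      simp only [_root_.map_smul, smul_mul_assoc, mul_smul_comm, smul_sub])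
    (fun X Y Y' => by simp only [map_add, mul_add, add_mul]; abel)
    (fun c X Y => by
      simp only [_root_.map_smul, smul_mul_assoc, mul_smul_comm, smul_sub])

noncomputable def Gb (p q k : ℕ) :
    Matrix (Fin p ⊕ Fin q) (Fin p ⊕ Fin q) ℂ →ₗ[ℂ]
      Matrix (Fin p ⊕ Fin q) (Fin p ⊕ Fin q) ℂ →ₗ[ℂ] Module.End ℂ (PolyU p q k) :=
  LinearMap.mk₂ ℂ (fun X Y => piUL p q k (X * Y - Y * X))
    (fun X X' Y => by
      rw [show (X + X') * Y - Y * (X + X') = (X * Y - Y * X) + (X' * Y - Y * X') by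
        noncomm_ring, map_add])
    (fun c X Y => by
      rw [show (c • X) * Y - Y * (c • X) = c • (X * Y - Y * X) by
        rw [smul_mul_assoc, mul_smul_comm, smul_sub], _root_.map_smul])
    (fun X Y Y' => by
      rw [show X * (Y + Y') - (Y + Y') * X = (X * Y - Y * X) + (X * Y' - Y' * X) by
        noncomm_ring, map_add])
    (fun c X Y => by
      rw [show X * (c • Y) - (c • Y) * X = c • (X * Y - Y * X) by
        rw [mul_smul_comm, smul_mul_assoc, smul_sub], _root_.map_smul])

set_option maxHeartbeats 1000000 in
lemma Fb_eq_Gb : Fb p q k = Gb p q k := by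
  apply LinearMap.ext_basis (Matrix.stdBasis ℂ _ _) (Matrix.stdBasis ℂ _ _)
  rintro ⟨r, s⟩ ⟨t, u⟩
  rw [Matrix.stdBasis_eq_single, Matrix.stdBasis_eq_single]
  show piUL p q k _ * piUL p q k _ - piUL p q k _ * piUL p q k _ = piUL p q k _
  rw [piUL_std, piUL_std, PiU_comm]
  by_cases hst : s = t
  · subst hst
    by_cases hur : u = r
    · subst hur
      simp [Matrix.single_mul_single_same, map_sub, piUL_std]
    · simp [Matrix.single_mul_single_same, Matrix.single_mul_single_of_ne,
        hur, Ne.symm hur, map_sub, map_zero, piUL_std]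
  · by_cases hur : u = r
    · subst hur
      simp [Matrix.single_mul_single_same, Matrix.single_mul_single_of_ne,
        hst, Ne.symm hst, map_sub, map_zero, piUL_std]
    · simp [Matrix.single_mul_single_of_ne, hst, Ne.symm hst, hur, Ne.symm hur,
        map_sub, map_zero, piUL_std]

lemma part_a (X Y : Matrix (Fin p ⊕ Fin q) (Fin p ⊕ Fin q) ℂ) :
    piU' p q k X * piU' p q k Y - piU' p q k Y * piU' p q k X = piU' p q k (X * Y - Y * X) := by
  have h := congrFun (congrArg (fun (B : _ →ₗ[ℂ] _ →ₗ[ℂ] Module.End ℂ (PolyU p q k)) =>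
    fun X Y => B X Y) (Fb_eq_Gb (p := p) (q := q) (k := k)))
  have h2 := congrFun (h X) Y
  simpa [Fb, Gb, LinearMap.mk₂_apply, piUL_apply] using h2

/-! ### Part (b) -/

noncomputable def sρ (p q k : ℕ) (g : Matrix (Fin k) (Fin k) ℂ) :
    ((Fin p × Fin k) ⊕ (Fin q × Fin k)) → PolyU p q k
  | Sum.inl (i, a) => ∑ b : Fin k, X (Sum.inl (i, b)) * C (g b a)
  | Sum.inr (j, a) => ∑ b : Fin k, X (Sum.inr (j, b)) * C (g⁻¹ a b)

lemma pderiv_aeval_eq {σ τ : Type*} [Fintype σ] [DecidableEq σ] [DecidableEq τ]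
    (s : σ → MvPolynomial τ ℂ) (u : τ) (f : MvPolynomial σ ℂ) :
    pderiv u (aeval s f) = ∑ v : σ, aeval s (pderiv v f) * pderiv u (s v) := by
  induction f using MvPolynomial.induction_on with
  | C a => simp
  | add f1 f2 h1 h2 =>
    rw [map_add, map_add, h1, h2, ← Finset.sum_add_distrib]
    exact Finset.sum_congr rfl fun v _ => by rw [map_add (pderiv v), map_add (aeval s)]; ring
  | mul_X f n ih =>
    rw [_root_.map_mul, aeval_X, pderiv_mul, ih, Finset.sum_mul]
    have hv : ∀ v : σ, aeval s (pderiv v (f * X n)) * pderiv u (s v)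
        = aeval s (pderiv v f) * pderiv u (s v) * s n
          + (if n = v then aeval s f * pderiv u (s v) else 0) := by
      intro v
      rw [pderiv_mul, map_add, _root_.map_mul, aeval_X, add_mul]
      rcases eq_or_ne n v with rfl | h
      · simp only [pderiv_X_self, mul_one, eq_self_iff_true, if_true]
        ring
      · simp only [pderiv_X_of_ne h, mul_zero, map_zero, zero_mul, add_zero, if_neg h]
        ring
    rw [Finset.sum_congr rfl fun v _ => hv v, Finset.sum_add_distrib, Finset.sum_ite_eq]
    simp
    try ring

end HoweAux

open Matrix MvPolynomial

/-- The substitution operator `ρ(g)`. -/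
noncomputable def rhoU' (p q k : ℕ) (g : Matrix (Fin k) (Fin k) ℂ) :
    PolyU p q k →ₐ[ℂ] PolyU p q k :=
  MvPolynomial.aeval fun v =>
    match v with
    | Sum.inl (i, a) =>
        ∑ b : Fin k, MvPolynomial.X (Sum.inl (i, b)) * MvPolynomial.C (g b a)
    | Sum.inr (j, a) =>
        ∑ b : Fin k, MvPolynomial.X (Sum.inr (j, b)) * MvPolynomial.C (g⁻¹ a b)

namespace HoweAux

variable {p q k : ℕ} (g : Matrix (Fin k) (Fin k) ℂ)

local notation "vt" => (Fin p × Fin k) ⊕ (Fin q × Fin k)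
local notation "Rg" => AlgHom.toLinearMap (rhoU' p q k g)

lemma rhoU'_eq : rhoU' p q k g = aeval (sρ p q k g) := by
  unfold rhoU' sρ
  rfl

lemma pderiv_s_inl_inl (i' : Fin p) (c : Fin k) (i : Fin p) (a : Fin k) :
    pderiv (Sum.inl (i, a) : vt) (sρ p q k g (Sum.inl (i', c)))
      = if i' = i then C (g a c) else 0 := by
  show pderiv (Sum.inl (i, a) : vt) (∑ b : Fin k, X (Sum.inl (i', b)) * C (g b c)) = _
  rw [map_sum]
  rcases eq_or_ne i' i with rfl | h
  · simp [pderiv_mul, Pi.single_apply, Prod.ext_iff, Finset.sum_ite_eq]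
  · simp [pderiv_mul, Pi.single_apply, Prod.ext_iff, h]

lemma pderiv_s_inl_inr (j : Fin q) (c : Fin k) (i : Fin p) (a : Fin k) :
    pderiv (Sum.inl (i, a) : vt) (sρ p q k g (Sum.inr (j, c))) = 0 := by
  show pderiv (Sum.inl (i, a) : vt) (∑ b : Fin k, X (Sum.inr (j, b)) * C (g⁻¹ c b)) = 0
  rw [map_sum]
  simp [pderiv_mul]

lemma pderiv_s_inr_inr (j' : Fin q) (c : Fin k) (j : Fin q) (a : Fin k) :
    pderiv (Sum.inr (j, a) : vt) (sρ p q k g (Sum.inr (j', c)))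
      = if j' = j then C (g⁻¹ c a) else 0 := by
  show pderiv (Sum.inr (j, a) : vt) (∑ b : Fin k, X (Sum.inr (j', b)) * C (g⁻¹ c b)) = _
  rw [map_sum]
  rcases eq_or_ne j' j with rfl | h
  · simp [pderiv_mul, Pi.single_apply, Prod.ext_iff, Finset.sum_ite_eq]
  · simp [pderiv_mul, Pi.single_apply, Prod.ext_iff, h]

lemma pderiv_s_inr_inl (i' : Fin p) (c : Fin k) (j : Fin q) (a : Fin k) :
    pderiv (Sum.inr (j, a) : vt) (sρ p q k g (Sum.inl (i', c))) = 0 := by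
  show pderiv (Sum.inr (j, a) : vt) (∑ b : Fin k, X (Sum.inl (i', b)) * C (g b c)) = 0
  rw [map_sum]
  simp [pderiv_mul]

lemma Dz_R (i : Fin p) (a : Fin k) :
    Do (Sum.inl (i, a) : vt) * Rg = ∑ c : Fin k, g a c • (Rg * Do (Sum.inl (i, c) : vt)) := by
  refine LinearMap.ext fun f => ?_
  simp only [Module.End.mul_apply, Do, AlgHom.toLinearMap_apply, LinearMap.coe_sum,
    Finset.sum_apply, LinearMap.smul_apply, Derivation.coeFn_coe]
  rw [rhoU'_eq, pderiv_aeval_eq (sρ p q k g) (Sum.inl (i, a)) f, Fintype.sum_sum_type]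
  simp only [Fintype.sum_prod_type]
  rw [show (∑ x : Fin q, ∑ y : Fin k,
        aeval (sρ p q k g) (pderiv (Sum.inr (x, y)) f) *
          pderiv (Sum.inl (i, a) : vt) (sρ p q k g (Sum.inr (x, y)))) = 0 by
    simp [pderiv_s_inl_inr], add_zero]
  rw [show (∑ x : Fin p, ∑ y : Fin k,
        aeval (sρ p q k g) (pderiv (Sum.inl (x, y)) f) *
          pderiv (Sum.inl (i, a) : vt) (sρ p q k g (Sum.inl (x, y))))
      = ∑ x : Fin p, ∑ y : Fin k, (if x = i then g a y • aeval (sρ p q k g) (pderiv (Sum.inl (x, y)) f) else 0) from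
    Finset.sum_congr rfl fun x _ => Finset.sum_congr rfl fun y _ => by
      rw [pderiv_s_inl_inl]
      split_ifs <;> simp [mul_comm, C_mul']]
  simp [Finset.sum_ite_eq, Finset.sum_ite_eq']

lemma Dw_R (j : Fin q) (a : Fin k) :
    Do (Sum.inr (j, a) : vt) * Rg = ∑ c : Fin k, g⁻¹ c a • (Rg * Do (Sum.inr (j, c) : vt)) := by
  refine LinearMap.ext fun f => ?_
  simp only [Module.End.mul_apply, Do, AlgHom.toLinearMap_apply, LinearMap.coe_sum,
    Finset.sum_apply, LinearMap.smul_apply, Derivation.coeFn_coe]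
  rw [rhoU'_eq, pderiv_aeval_eq (sρ p q k g) (Sum.inr (j, a)) f, Fintype.sum_sum_type]
  simp only [Fintype.sum_prod_type]
  rw [show (∑ x : Fin p, ∑ y : Fin k,
        aeval (sρ p q k g) (pderiv (Sum.inl (x, y)) f) *
          pderiv (Sum.inr (j, a) : vt) (sρ p q k g (Sum.inl (x, y)))) = 0 by
    simp [pderiv_s_inr_inl], zero_add]
  rw [show (∑ x : Fin q, ∑ y : Fin k,
        aeval (sρ p q k g) (pderiv (Sum.inr (x, y)) f) *
          pderiv (Sum.inr (j, a) : vt) (sρ p q k g (Sum.inr (x, y))))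
      = ∑ x : Fin q, ∑ y : Fin k, (if x = j then g⁻¹ y a • aeval (sρ p q k g) (pderiv (Sum.inr (x, y)) f) else 0) from
    Finset.sum_congr rfl fun x _ => Finset.sum_congr rfl fun y _ => by
      rw [pderiv_s_inr_inr]
      split_ifs <;> simp [mul_comm, C_mul']]
  simp [Finset.sum_ite_eq, Finset.sum_ite_eq']

lemma X_C_mul (v : vt) (r : ℂ) (y : PolyU p q k) :
    (X v * C r) * y = r • (X v * y) := by
  rw [mul_assoc, C_mul', mul_smul_comm]

lemma R_mulLeft (f0 : PolyU p q k) :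
    Rg * LinearMap.mulLeft ℂ f0 = LinearMap.mulLeft ℂ (rhoU' p q k g f0) * Rg := by
  refine LinearMap.ext fun f => ?_
  simp [Module.End.mul_apply, _root_.map_mul]

lemma R_Mo_inl (j : Fin p) (c : Fin k) :
    Rg * Mo (Sum.inl (j, c) : vt) = ∑ a : Fin k, g a c • (Mo (Sum.inl (j, a) : vt) * Rg) := by
  rw [show Mo (Sum.inl (j, c) : vt) = LinearMap.mulLeft ℂ (X (Sum.inl (j, c)) : PolyU p q k) from rfl,
    R_mulLeft]
  have hx : rhoU' p q k g (X (Sum.inl (j, c)))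
      = ∑ b : Fin k, (X (Sum.inl (j, b)) : PolyU p q k) * C (g b c) := by
    rw [rhoU'_eq, aeval_X]
    rfl
  rw [hx]
  refine LinearMap.ext fun f => ?_
  simp only [Module.End.mul_apply, LinearMap.mulLeft_apply, LinearMap.coe_sum,
    Finset.sum_apply, LinearMap.smul_apply, Finset.sum_mul]
  exact Finset.sum_congr rfl fun b _ => by rw [X_C_mul]; rfl

lemma R_Mo_inr (i : Fin q) (c : Fin k) :
    Rg * Mo (Sum.inr (i, c) : vt) = ∑ a : Fin k, g⁻¹ c a • (Mo (Sum.inr (i, a) : vt) * Rg) := by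
  rw [show Mo (Sum.inr (i, c) : vt) = LinearMap.mulLeft ℂ (X (Sum.inr (i, c)) : PolyU p q k) from rfl,
    R_mulLeft]
  have hx : rhoU' p q k g (X (Sum.inr (i, c)))
      = ∑ b : Fin k, (X (Sum.inr (i, b)) : PolyU p q k) * C (g⁻¹ c b) := by
    rw [rhoU'_eq, aeval_X]
    rfl
  rw [hx]
  refine LinearMap.ext fun f => ?_
  simp only [Module.End.mul_apply, LinearMap.mulLeft_apply, LinearMap.coe_sum,
    Finset.sum_apply, LinearMap.smul_apply, Finset.sum_mul]
  exact Finset.sum_congr rfl fun b _ => by rw [X_C_mul]; rfl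

lemma comm_ll (i j : Fin p) :
    Rg * PiU p q k (Sum.inl i) (Sum.inl j) = PiU p q k (Sum.inl i) (Sum.inl j) * Rg := by
  rw [PiU_ll, mul_smul_comm, smul_mul_assoc]
  congr 1
  rw [Finset.mul_sum, Finset.sum_mul]
  have hL : ∀ c : Fin k, Rg * (Mo (Sum.inl (j, c) : vt) * Do (Sum.inl (i, c) : vt))
      = ∑ a : Fin k, g a c • (Mo (Sum.inl (j, a) : vt) * (Rg * Do (Sum.inl (i, c) : vt))) := by
    intro c
    rw [← mul_assoc, R_Mo_inl, Finset.sum_mul]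
    exact Finset.sum_congr rfl fun a _ => by rw [smul_mul_assoc, mul_assoc]
  have hR : ∀ a : Fin k, (Mo (Sum.inl (j, a) : vt) * Do (Sum.inl (i, a) : vt)) * Rg
      = ∑ c : Fin k, g a c • (Mo (Sum.inl (j, a) : vt) * (Rg * Do (Sum.inl (i, c) : vt))) := by
    intro a
    rw [mul_assoc, Dz_R, Finset.mul_sum]
    exact Finset.sum_congr rfl fun c _ => by rw [mul_smul_comm]
  rw [Finset.sum_congr rfl fun c _ => hL c, Finset.sum_congr rfl fun a _ => hR a,
    Finset.sum_comm]

lemma comm_lr (hg : IsUnit g.det) (i : Fin p) (j : Fin q) :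
    Rg * PiU p q k (Sum.inl i) (Sum.inr j) = PiU p q k (Sum.inl i) (Sum.inr j) * Rg := by
  rw [PiU_lr, mul_smul_comm, smul_mul_assoc]
  congr 1
  rw [Finset.mul_sum, Finset.sum_mul]
  have hR : ∀ a : Fin k, (Do (Sum.inl (i, a) : vt) * Do (Sum.inr (j, a) : vt)) * Rg
      = ∑ c : Fin k, ∑ d : Fin k,
          (g⁻¹ c a * g a d) • (Rg * (Do (Sum.inl (i, d) : vt) * Do (Sum.inr (j, c) : vt))) := by
    intro a
    rw [mul_assoc, Dw_R, Finset.mul_sum]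
    refine Finset.sum_congr rfl fun c _ => ?_
    rw [mul_smul_comm, ← mul_assoc, Dz_R, Finset.sum_mul, Finset.smul_sum]
    refine Finset.sum_congr rfl fun d _ => ?_
    rw [smul_mul_assoc, smul_smul, mul_assoc]
  rw [Finset.sum_congr rfl fun a _ => hR a, Finset.sum_comm]
  refine Finset.sum_congr rfl fun c _ => ?_
  rw [Finset.sum_comm]
  have hcol : ∀ d : Fin k,
      (∑ a : Fin k, (g⁻¹ c a * g a d) • (Rg * (Do (Sum.inl (i, d) : vt) * Do (Sum.inr (j, c) : vt))))
        = ((g⁻¹ * g) c d) • (Rg * (Do (Sum.inl (i, d) : vt) * Do (Sum.inr (j, c) : vt))) := by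
    intro d
    rw [← Finset.sum_smul, Matrix.mul_apply]
  rw [Finset.sum_congr rfl fun d _ => hcol d, Matrix.nonsing_inv_mul g hg]
  simp [Matrix.one_apply, ite_smul, Finset.sum_ite_eq, Finset.sum_ite_eq']

lemma comm_rl (hg : IsUnit g.det) (i : Fin q) (j : Fin p) :
    Rg * PiU p q k (Sum.inr i) (Sum.inl j) = PiU p q k (Sum.inr i) (Sum.inl j) * Rg := by
  have hfix : rhoU' p q k g ((-(1 / 2) : ℂ) • ∑ a : Fin k,
      (X (Sum.inl (j, a)) : PolyU p q k) * X (Sum.inr (i, a)))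
      = (-(1 / 2) : ℂ) • ∑ a : Fin k,
        (X (Sum.inl (j, a)) : PolyU p q k) * X (Sum.inr (i, a)) := by
    rw [_root_.map_smul, map_sum]
    congr 1
    have hterm : ∀ a : Fin k,
        rhoU' p q k g ((X (Sum.inl (j, a)) : PolyU p q k) * X (Sum.inr (i, a)))
          = ∑ b : Fin k, ∑ c : Fin k,
              (g b a * g⁻¹ a c) • ((X (Sum.inl (j, b)) : PolyU p q k) * X (Sum.inr (i, c))) := by
      intro a
      rw [_root_.map_mul, rhoU'_eq, aeval_X, aeval_X]
      show ((∑ b : Fin k, (X (Sum.inl (j, b)) : PolyU p q k) * C (g b a)) *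
          (∑ c : Fin k, (X (Sum.inr (i, c)) : PolyU p q k) * C (g⁻¹ a c))) = _
      rw [Finset.sum_mul_sum]
      refine Finset.sum_congr rfl fun b _ => Finset.sum_congr rfl fun c _ => ?_
      rw [mul_mul_mul_comm, ← C_mul, mul_comm _ (C (g b a * g⁻¹ a c)), C_mul']
    rw [Finset.sum_congr rfl fun a _ => hterm a, Finset.sum_comm]
    refine Finset.sum_congr rfl fun b _ => ?_
    rw [Finset.sum_comm]
    have hcol : ∀ c : Fin k,
        (∑ a : Fin k, (g b a * g⁻¹ a c) •
            ((X (Sum.inl (j, b)) : PolyU p q k) * X (Sum.inr (i, c))))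
          = ((g * g⁻¹) b c) • ((X (Sum.inl (j, b)) : PolyU p q k) * X (Sum.inr (i, c))) :=
      fun c => by rw [← Finset.sum_smul, Matrix.mul_apply]
    rw [Finset.sum_congr rfl fun c _ => hcol c, Matrix.mul_nonsing_inv g hg]
    simp [Matrix.one_apply, ite_smul, Finset.sum_ite_eq, Finset.sum_ite_eq']
  rw [show PiU p q k (Sum.inr i) (Sum.inl j)
      = LinearMap.mulLeft ℂ ((-(1 / 2) : ℂ) • ∑ a : Fin k,
          (X (Sum.inl (j, a)) : PolyU p q k) * X (Sum.inr (i, a))) from rfl]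
  rw [R_mulLeft, hfix]

end HoweAux

namespace HoweAux

variable {p q k : ℕ} (g : Matrix (Fin k) (Fin k) ℂ)

local notation "vt" => (Fin p × Fin k) ⊕ (Fin q × Fin k)
local notation "Rg" => AlgHom.toLinearMap (rhoU' p q k g)

set_option maxHeartbeats 2000000 in
lemma comm_rr (i j : Fin q) :
    Rg * PiU p q k (Sum.inr i) (Sum.inr j) = PiU p q k (Sum.inr i) (Sum.inr j) * Rg := by
  rw [show PiU p q k (Sum.inr i) (Sum.inr j)
      = ∑ a : Fin k, Do (Sum.inr (j, a) : vt) * Mo (Sum.inr (i, a) : vt) from rfl]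
  rw [Finset.mul_sum, Finset.sum_mul]
  have hL : ∀ c : Fin k, Rg * (Do (Sum.inr (j, c) : vt) * Mo (Sum.inr (i, c) : vt))
      = (∑ a : Fin k, g⁻¹ c a • (Mo (Sum.inr (i, a) : vt) * (Rg * Do (Sum.inr (j, c) : vt))))
        + (if (Sum.inr (j, c) : vt) = Sum.inr (i, c) then Rg else 0) := by
    intro c
    rw [DM_eq, mul_add, ← mul_assoc, R_Mo_inr, Finset.sum_mul]
    congr 1
    all_goals first
      | (split_ifs <;> simp)
      | exact Finset.sum_congr rfl fun a _ => by rw [smul_mul_assoc, mul_assoc]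
  have hR : ∀ a : Fin k, (Do (Sum.inr (j, a) : vt) * Mo (Sum.inr (i, a) : vt)) * Rg
      = (∑ c : Fin k, g⁻¹ c a • (Mo (Sum.inr (i, a) : vt) * (Rg * Do (Sum.inr (j, c) : vt))))
        + (if (Sum.inr (j, a) : vt) = Sum.inr (i, a) then Rg else 0) := by
    intro a
    rw [DM_eq, add_mul]
    congr 1
    all_goals first
      | (split_ifs <;> simp)
      | (rw [mul_assoc, Dw_R, Finset.mul_sum]
         exact Finset.sum_congr rfl fun c _ => by rw [mul_smul_comm])
  rw [Finset.sum_congr rfl fun c _ => hL c, Finset.sum_congr rfl fun a _ => hR a,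
    Finset.sum_add_distrib, Finset.sum_add_distrib]
  refine congrArg (· + _) ?_
  rw [Finset.sum_comm]

set_option maxHeartbeats 2000000 in
lemma part_b (hg : IsUnit g.det) (X : Matrix (Fin p ⊕ Fin q) (Fin p ⊕ Fin q) ℂ) :
    Rg ∘ₗ piU' p q k X = piU' p q k X ∘ₗ Rg := by
  have hunit : ∀ r s : Fin p ⊕ Fin q,
      Rg * PiU p q k r s = PiU p q k r s * Rg := by
    rintro (i | i) (j | j)
    · exact comm_ll g i j
    · exact comm_lr g hg i j
    · exact comm_rl g hg i j
    · exact comm_rr g i j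
  rw [← Module.End.mul_eq_comp, ← Module.End.mul_eq_comp]
  simp only [piU']
  rw [Finset.mul_sum, Finset.sum_mul]
  refine Finset.sum_congr rfl fun r _ => ?_
  rw [Finset.mul_sum, Finset.sum_mul]
  refine Finset.sum_congr rfl fun s _ => ?_
  rw [mul_smul_comm, smul_mul_assoc, hunit]

end HoweAux

theorem piU_lie_hom_and_GLk_invariant (p q k : ℕ) (hp : 1 ≤ p) (hq : 1 ≤ q) (hk : 1 ≤ k) :
    -- (a) `π` is a Lie algebra homomorphism `gl_{p+q}(ℂ) → End(ℂ[z,w])`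
    (∀ X Y : Matrix (Fin p ⊕ Fin q) (Fin p ⊕ Fin q) ℂ,
      piU p q k X * piU p q k Y - piU p q k Y * piU p q k X
        = piU p q k (X * Y - Y * X)) ∧
    -- (b) `π(X)` commutes with the action `ρ(g)` for every invertible `g ∈ GL_k(ℂ)`
    (∀ g : Matrix (Fin k) (Fin k) ℂ, IsUnit g.det →
      ∀ X : Matrix (Fin p ⊕ Fin q) (Fin p ⊕ Fin q) ℂ,
        (rhoU p q k g).toLinearMap ∘ₗ piU p q k X
          = piU p q k X ∘ₗ (rhoU p q k g).toLinearMap) := by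
  constructor
  · intro X Y
    exact HoweAux.part_a X Y
  · intro g hg X
    exact HoweAux.part_b g hg X
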